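/- Let d ≥ 1 and let P₀ be a real polynomial of degree ≤ d in the two variables (x₂,y₂), regarded also as a polynomial in four variables (x₁,y₁,x₂,y₂). Then the minimum over two-variable polynomials p₁, p₂, p₃ of degree ≤ d of the coefficient norm ‖P₀(x₂,y₂) + p₁(x₁,x₂) + p₂(y₁,y₂) + p₃(x₁+y₁,x₂+y₂)‖ equals the minimum over one-variable polynomials q₁, q₂, q₃ of degree ≤ d of the coefficient norm ‖P₀(x₂,y₂) + q₁(x₂) + q₂(y₂) + q₃(x₂+y₂)‖. -/

import Mathlib

open MvPolynomial

/-- The ℓ² norm of the vector of coefficients of a polynomial. -/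
noncomputable def coeffNorm {σ : Type*} (p : MvPolynomial σ ℝ) : ℝ :=
  Real.sqrt (∑ α ∈ p.support, (p.coeff α) ^ 2)

lemma coeffNorm_nonneg {σ : Type*} (p : MvPolynomial σ ℝ) : 0 ≤ coeffNorm p :=
  Real.sqrt_nonneg _

lemma coeffNorm_rename {σ τ : Type*} {f : σ → τ} (hf : Function.Injective f)
    (p : MvPolynomial σ ℝ) : coeffNorm (rename f p) = coeffNorm p := by
  classical
  unfold coeffNorm
  congr 1
  rw [support_rename_of_injective hf,
    Finset.sum_image (fun a _ b _ h => Finsupp.mapDomain_injective hf h)]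
  exact Finset.sum_congr rfl fun u _ => by rw [coeff_rename_mapDomain f hf]

lemma coeff_killCompl {σ τ : Type*} {f : σ → τ}
    (hf : Function.Injective f) (p : MvPolynomial τ ℝ) (s : σ →₀ ℕ) :
    (killCompl hf p).coeff s = p.coeff (s.mapDomain f) := by
  classical
  induction p using MvPolynomial.induction_on' with
  | add p q hp hq => simp [map_add, coeff_add, hp, hq]
  | monomial u r =>
    by_cases h : (u.support : Set τ) ⊆ Set.range f
    · obtain ⟨w, rfl⟩ : ∃ w : σ →₀ ℕ, u = w.mapDomain f :=
        ⟨Finsupp.comapDomain f u hf.injOn, (Finsupp.mapDomain_comapDomain f hf u h).symm⟩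
      rw [← rename_monomial, killCompl_rename_app, coeff_rename_mapDomain f hf,
        coeff_monomial]
    · rw [Set.not_subset] at h
      obtain ⟨j, hj, hjr⟩ := h
      have hj' : j ∈ u.support := by exact_mod_cast hj
      have h1 : (killCompl hf (monomial u r)) = 0 := by
        rw [killCompl, aeval_monomial]
        have : (u.prod fun i e =>
            (if h : i ∈ Set.range f then
              (X ((Equiv.ofInjective f hf).symm ⟨i, h⟩) : MvPolynomial σ ℝ) else 0) ^ e) = 0 := by
          apply Finset.prod_eq_zero hj'
          dsimp only
          rw [dif_neg hjr]
          exact zero_pow (Finsupp.mem_support_iff.mp hj')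
        rw [this, mul_zero]
      have hne : u ≠ Finsupp.mapDomain f s := by
        intro hc
        apply hjr
        have h2 := Finsupp.mapDomain_support (f := f) (s := s)
        rw [← hc] at h2
        obtain ⟨a, -, rfl⟩ := Finset.mem_image.mp (h2 hj')
        exact ⟨a, rfl⟩
      rw [h1, coeff_zero, coeff_monomial, if_neg hne]

lemma coeffNorm_killCompl_le {σ τ : Type*} {f : σ → τ} (hf : Function.Injective f)
    (p : MvPolynomial τ ℝ) : coeffNorm (killCompl hf p) ≤ coeffNorm p := by
  classical
  apply Real.sqrt_le_sqrt
  calc ∑ s ∈ (killCompl hf p).support, ((killCompl hf p).coeff s) ^ 2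
      = ∑ s ∈ (killCompl hf p).support, (p.coeff (s.mapDomain f)) ^ 2 := by
        simp [coeff_killCompl hf]
    _ = ∑ t ∈ (killCompl hf p).support.image (Finsupp.mapDomain f), (p.coeff t) ^ 2 := by
        rw [Finset.sum_image (fun a _ b _ h => Finsupp.mapDomain_injective hf h)]
    _ ≤ ∑ t ∈ p.support, (p.coeff t) ^ 2 := by
        apply Finset.sum_le_sum_of_subset_of_nonneg _ (fun t _ _ => sq_nonneg _)
        intro t ht
        obtain ⟨s, hs, rfl⟩ := Finset.mem_image.mp ht
        rw [mem_support_iff] at hs ⊢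
        rwa [coeff_killCompl hf] at hs

lemma totalDegree_polyAeval_X_le {n : ℕ} (q : Polynomial ℝ) (i : Fin n) :
    (Polynomial.aeval (X i : MvPolynomial (Fin n) ℝ) q).totalDegree ≤ q.natDegree := by
  rw [Polynomial.aeval_eq_sum_range]
  apply (totalDegree_finset_sum _ _).trans
  apply Finset.sup_le
  intro b hb
  apply (totalDegree_smul_le _ _).trans
  apply (totalDegree_pow _ _).trans
  rw [totalDegree_X, mul_one]
  exact Nat.lt_succ_iff.mp (Finset.mem_range.mp hb)

set_option maxHeartbeats 1000000 in
/-- the two interpretations of `‖P₀‖_nd` coincide: for a polynomial `P₀`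
in the variables `(x₂,y₂)` (regarded in four variables `(x₁,y₁,x₂,y₂)`, indexed
`0 ↦ x₁`, `1 ↦ y₁`, `2 ↦ x₂`, `3 ↦ y₂`, via the embedding `x₂ ↦ X 2`, `y₂ ↦ X 3`),
the minimum of `‖P₀(x₂,y₂) + p₁(x₁,x₂) + p₂(y₁,y₂) + p₃(x₁+y₁,x₂+y₂)‖` over two-variable
polynomials `p₁,p₂,p₃` of degree `≤ d` equals the minimum of
`‖P₀(x₂,y₂) + q₁(x₂) + q₂(y₂) + q₃(x₂+y₂)‖` over one-variable polynomials `q₁,q₂,q₃` of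
degree `≤ d`. -/
theorem stmt_10 (d : ℕ) (hd : 1 ≤ d)
    (P₀ : MvPolynomial (Fin 2) ℝ) (hP₀ : P₀.totalDegree ≤ d) :
    sInf { r : ℝ | ∃ p₁ p₂ p₃ : MvPolynomial (Fin 2) ℝ,
        p₁.totalDegree ≤ d ∧ p₂.totalDegree ≤ d ∧ p₃.totalDegree ≤ d ∧
        r = coeffNorm ((MvPolynomial.aeval
              ![(MvPolynomial.X 2 : MvPolynomial (Fin 4) ℝ), MvPolynomial.X 3] P₀)
          + MvPolynomial.aeval ![MvPolynomial.X 0, MvPolynomial.X 2] p₁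
          + MvPolynomial.aeval ![MvPolynomial.X 1, MvPolynomial.X 3] p₂
          + MvPolynomial.aeval ![MvPolynomial.X 0 + MvPolynomial.X 1,
              MvPolynomial.X 2 + MvPolynomial.X 3] p₃) }
    = sInf { r : ℝ | ∃ q₁ q₂ q₃ : Polynomial ℝ,
        q₁.natDegree ≤ d ∧ q₂.natDegree ≤ d ∧ q₃.natDegree ≤ d ∧
        r = coeffNorm (P₀ + Polynomial.aeval (MvPolynomial.X 0) q₁
          + Polynomial.aeval (MvPolynomial.X 1) q₂
          + Polynomial.aeval (MvPolynomial.X 0 + MvPolynomial.X 1) q₃) } := by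
  classical
  set g : Fin 2 → Fin 4 := ![2, 3] with hgdef
  have hg : Function.Injective g := by decide
  set L := { r : ℝ | ∃ p₁ p₂ p₃ : MvPolynomial (Fin 2) ℝ,
        p₁.totalDegree ≤ d ∧ p₂.totalDegree ≤ d ∧ p₃.totalDegree ≤ d ∧
        r = coeffNorm ((MvPolynomial.aeval
              ![(MvPolynomial.X 2 : MvPolynomial (Fin 4) ℝ), MvPolynomial.X 3] P₀)
          + MvPolynomial.aeval ![MvPolynomial.X 0, MvPolynomial.X 2] p₁
          + MvPolynomial.aeval ![MvPolynomial.X 1, MvPolynomial.X 3] p₂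
          + MvPolynomial.aeval ![MvPolynomial.X 0 + MvPolynomial.X 1,
              MvPolynomial.X 2 + MvPolynomial.X 3] p₃) } with hL
  set R := { r : ℝ | ∃ q₁ q₂ q₃ : Polynomial ℝ,
        q₁.natDegree ≤ d ∧ q₂.natDegree ≤ d ∧ q₃.natDegree ≤ d ∧
        r = coeffNorm (P₀ + Polynomial.aeval (MvPolynomial.X 0) q₁
          + Polynomial.aeval (MvPolynomial.X 1) q₂
          + Polynomial.aeval (MvPolynomial.X 0 + MvPolynomial.X 1) q₃) } with hR
  have hLne : L.Nonempty := ⟨_, 0, 0, 0, by simp, by simp, by simp, rfl⟩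
  have hRne : R.Nonempty := ⟨_, 0, 0, 0, by simp, by simp, by simp, rfl⟩
  have hLbdd : BddBelow L := by
    refine ⟨0, ?_⟩
    rintro r ⟨p₁, p₂, p₃, -, -, -, rfl⟩
    exact coeffNorm_nonneg _
  have hRbdd : BddBelow R := by
    refine ⟨0, ?_⟩
    rintro r ⟨q₁, q₂, q₃, -, -, -, rfl⟩
    exact coeffNorm_nonneg _
  -- the P₀ term is a rename
  have hP0rn : (MvPolynomial.aeval
      ![(MvPolynomial.X 2 : MvPolynomial (Fin 4) ℝ), MvPolynomial.X 3] P₀)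
      = rename g P₀ := by
    rw [← aeval_X_left_apply (rename g P₀), aeval_rename]
    have : ((X ∘ g : Fin 2 → MvPolynomial (Fin 4) ℝ)) = ![X 2, X 3] := by
      funext i; fin_cases i <;> rfl
    rw [this]
  have hRsubL : R ⊆ L := by
    rintro r ⟨q₁, q₂, q₃, h1, h2, h3, rfl⟩
    refine ⟨Polynomial.aeval (X 1) q₁, Polynomial.aeval (X 1) q₂, Polynomial.aeval (X 1) q₃,
      (totalDegree_polyAeval_X_le q₁ 1).trans h1,
      (totalDegree_polyAeval_X_le q₂ 1).trans h2,
      (totalDegree_polyAeval_X_le q₃ 1).trans h3, ?_⟩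
    rw [hP0rn]
    have e1 : MvPolynomial.aeval (R := ℝ) ![(MvPolynomial.X 0 : MvPolynomial (Fin 4) ℝ), MvPolynomial.X 2]
        (Polynomial.aeval (X 1) q₁) = rename g (Polynomial.aeval (X 0) q₁) := by
      have A := Polynomial.aeval_algHom_apply
        (MvPolynomial.aeval ![(MvPolynomial.X 0 : MvPolynomial (Fin 4) ℝ), MvPolynomial.X 2])
        (X 1 : MvPolynomial (Fin 2) ℝ) q₁
      have B := Polynomial.aeval_algHom_apply (rename (R := ℝ) g)
        (X 0 : MvPolynomial (Fin 2) ℝ) q₁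
      rw [← A, ← B]
      simp [hgdef]
    have e2 : MvPolynomial.aeval (R := ℝ) ![(MvPolynomial.X 1 : MvPolynomial (Fin 4) ℝ), MvPolynomial.X 3]
        (Polynomial.aeval (X 1) q₂) = rename g (Polynomial.aeval (X 1) q₂) := by
      have A := Polynomial.aeval_algHom_apply
        (MvPolynomial.aeval ![(MvPolynomial.X 1 : MvPolynomial (Fin 4) ℝ), MvPolynomial.X 3])
        (X 1 : MvPolynomial (Fin 2) ℝ) q₂
      have B := Polynomial.aeval_algHom_apply (rename (R := ℝ) g)
        (X 1 : MvPolynomial (Fin 2) ℝ) q₂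
      rw [← A, ← B]
      simp [hgdef]
    have e3 : MvPolynomial.aeval (R := ℝ) ![(MvPolynomial.X 0 + MvPolynomial.X 1 : MvPolynomial (Fin 4) ℝ),
        MvPolynomial.X 2 + MvPolynomial.X 3]
        (Polynomial.aeval (X 1) q₃) = rename g (Polynomial.aeval (X 0 + X 1) q₃) := by
      have A := Polynomial.aeval_algHom_apply
        (MvPolynomial.aeval ![(MvPolynomial.X 0 + MvPolynomial.X 1 : MvPolynomial (Fin 4) ℝ),
          MvPolynomial.X 2 + MvPolynomial.X 3])
        (X 1 : MvPolynomial (Fin 2) ℝ) q₃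
      have B := Polynomial.aeval_algHom_apply (rename (R := ℝ) g)
        (X 0 + X 1 : MvPolynomial (Fin 2) ℝ) q₃
      rw [← A, ← B]
      simp [hgdef]
    rw [e1, e2, e3, ← map_add, ← map_add, ← map_add, coeffNorm_rename hg]
  have h1 : sInf L ≤ sInf R := csInf_le_csInf hLbdd hRne hRsubL
  have h2 : sInf R ≤ sInf L := by
    apply le_csInf hLne
    rintro r ⟨p₁, p₂, p₃, h1', h2', h3', rfl⟩
    set K := killCompl (R := ℝ) hg with hK
    set LP := ((MvPolynomial.aeval
              ![(MvPolynomial.X 2 : MvPolynomial (Fin 4) ℝ), MvPolynomial.X 3] P₀)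
          + MvPolynomial.aeval ![MvPolynomial.X 0, MvPolynomial.X 2] p₁
          + MvPolynomial.aeval ![MvPolynomial.X 1, MvPolynomial.X 3] p₂
          + MvPolynomial.aeval ![MvPolynomial.X 0 + MvPolynomial.X 1,
              MvPolynomial.X 2 + MvPolynomial.X 3] p₃) with hLP
    have hK0 : K (X 0) = 0 := by
      rw [hK, killCompl, aeval_X, dif_neg]
      rintro ⟨i, hi⟩
      fin_cases i <;> simp_all [hgdef] <;> exact absurd hi (by decide)
    have hK1 : K (X 1) = 0 := by
      rw [hK, killCompl, aeval_X, dif_neg]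
      rintro ⟨i, hi⟩
      fin_cases i <;> simp_all [hgdef] <;> exact absurd hi (by decide)
    have hK2 : K (X 2) = X 0 := by
      have h : (X 2 : MvPolynomial (Fin 4) ℝ) = rename g (X 0) := (rename_X g 0).symm
      rw [h, hK, killCompl_rename_app]
    have hK3 : K (X 3) = X 1 := by
      have h : (X 3 : MvPolynomial (Fin 4) ℝ) = rename g (X 1) := (rename_X g 1).symm
      rw [h, hK, killCompl_rename_app]
    set q₁ : Polynomial ℝ := MvPolynomial.aeval (R := ℝ) ![(0 : Polynomial ℝ), Polynomial.X] p₁ with hq₁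
    set q₂ : Polynomial ℝ := MvPolynomial.aeval (R := ℝ) ![(0 : Polynomial ℝ), Polynomial.X] p₂ with hq₂
    set q₃ : Polynomial ℝ := MvPolynomial.aeval (R := ℝ) ![(0 : Polynomial ℝ), Polynomial.X] p₃ with hq₃
    have hdeg : ∀ p : MvPolynomial (Fin 2) ℝ, p.totalDegree ≤ d →
        (MvPolynomial.aeval (R := ℝ) ![(0 : Polynomial ℝ), Polynomial.X] p : Polynomial ℝ).natDegree ≤ d := by
      intro p hp
      have := MvPolynomial.aeval_natDegree_le (n := 1) p hp ![(0 : Polynomial ℝ), Polynomial.X] (fun i => by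
        fin_cases i <;> simp)
      simpa using this
    have hcomp : ∀ (w : MvPolynomial (Fin 2) ℝ) (p : MvPolynomial (Fin 2) ℝ),
        Polynomial.aeval w (MvPolynomial.aeval (R := ℝ) ![(0 : Polynomial ℝ), Polynomial.X] p)
          = MvPolynomial.aeval (R := ℝ) ![0, w] p := by
      intro w p
      rw [comp_aeval_apply]
      have hfun : (fun i => (Polynomial.aeval w) (![(0 : Polynomial ℝ), Polynomial.X] i))
          = ![(0 : MvPolynomial (Fin 2) ℝ), w] := by
        funext i; fin_cases i <;> simp
      rw [hfun]
    have e1 : K (MvPolynomial.aeval ![(MvPolynomial.X 0 : MvPolynomial (Fin 4) ℝ), X 2] p₁)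
        = MvPolynomial.aeval (R := ℝ) ![0, X 0] p₁ := by
      rw [comp_aeval_apply]
      have hfun : (fun i => K (![(MvPolynomial.X 0 : MvPolynomial (Fin 4) ℝ), X 2] i))
          = ![(0 : MvPolynomial (Fin 2) ℝ), X 0] := by
        funext i; fin_cases i <;> simp [hK0, hK2]
      rw [hfun]
    have e2 : K (MvPolynomial.aeval ![(MvPolynomial.X 1 : MvPolynomial (Fin 4) ℝ), X 3] p₂)
        = MvPolynomial.aeval (R := ℝ) ![0, X 1] p₂ := by
      rw [comp_aeval_apply]
      have hfun : (fun i => K (![(MvPolynomial.X 1 : MvPolynomial (Fin 4) ℝ), X 3] i))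
          = ![(0 : MvPolynomial (Fin 2) ℝ), X 1] := by
        funext i; fin_cases i <;> simp [hK1, hK3]
      rw [hfun]
    have e3 : K (MvPolynomial.aeval ![(MvPolynomial.X 0 + MvPolynomial.X 1 :
          MvPolynomial (Fin 4) ℝ), X 2 + X 3] p₃)
        = MvPolynomial.aeval (R := ℝ) ![0, X 0 + X 1] p₃ := by
      rw [comp_aeval_apply]
      have hfun : (fun i => K (![(MvPolynomial.X 0 + MvPolynomial.X 1 : MvPolynomial (Fin 4) ℝ),
            X 2 + X 3] i))
          = ![(0 : MvPolynomial (Fin 2) ℝ), X 0 + X 1] := by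
        funext i; fin_cases i <;> simp [hK0, hK1, hK2, hK3]
      rw [hfun]
    have key : K LP = P₀ + Polynomial.aeval (X 0) q₁ + Polynomial.aeval (X 1) q₂
        + Polynomial.aeval (X 0 + X 1) q₃ := by
      rw [hLP, map_add, map_add, map_add, hP0rn]
      rw [show K (rename g P₀) = P₀ from killCompl_rename_app hg P₀]
      rw [e1, e2, e3, hq₁, hq₂, hq₃, hcomp, hcomp, hcomp]
    have hle : coeffNorm (K LP) ≤ coeffNorm LP := coeffNorm_killCompl_le hg LP
    have hmem : coeffNorm (K LP) ∈ R := by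
      rw [key]
      exact ⟨q₁, q₂, q₃, hdeg p₁ h1', hdeg p₂ h2', hdeg p₃ h3', rfl⟩
    exact le_trans (csInf_le hRbdd hmem) hle
  exact le_antisymm h1 h2
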